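/- For every p ∈ X and every y ∈ ℝ^d, the Fenchel coupling satisfies F(p, y) ≥ (K/2) ‖Q(y) − p‖². -/

import Mathlib

open scoped RealInnerProductSpace

/-- The Fenchel coupling `F(p,y) = h(p) + h*(y) − ⟨y,p⟩` of a `K`-strongly convex
regularizer `h` on a compact convex set `X` bounds `(K/2)‖Q(y) − p‖²` from above,
where `Q` is the induced mirror map. -/
theorem fenchel_coupling_lower_bound {d : ℕ}
    (X : Set (EuclideanSpace ℝ (Fin d))) (hXc : IsCompact X)
    (hXconv : Convex ℝ X) (hXne : X.Nonempty)
    (h : EuclideanSpace ℝ (Fin d) → ℝ) (K : ℝ) (hK : 0 < K)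
    (hcont : ContinuousOn h X)
    (hsc : ∀ x ∈ X, ∀ x' ∈ X, ∀ l ∈ Set.Icc (0 : ℝ) 1,
      h (l • x + (1 - l) • x') ≤
        l * h x + (1 - l) * h x' - K / 2 * l * (1 - l) * ‖x - x'‖ ^ 2)
    (Q : EuclideanSpace ℝ (Fin d) → EuclideanSpace ℝ (Fin d))
    (hQmem : ∀ y, Q y ∈ X)
    (hQmax : ∀ y, ∀ x ∈ X, ⟪y, x⟫ - h x ≤ ⟪y, Q y⟫ - h (Q y))
    (hstar : EuclideanSpace ℝ (Fin d) → ℝ)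
    (hhstar : ∀ y, hstar y = ⟪y, Q y⟫ - h (Q y))
    (F : EuclideanSpace ℝ (Fin d) → EuclideanSpace ℝ (Fin d) → ℝ)
    (hF : ∀ p y, F p y = h p + hstar y - ⟪y, p⟫)
    (p : EuclideanSpace ℝ (Fin d)) (hp : p ∈ X)
    (y : EuclideanSpace ℝ (Fin d)) :
    K / 2 * ‖Q y - p‖ ^ 2 ≤ F p y := by
  set s : ℝ := ‖Q y - p‖ ^ 2 with hs
  have hs0 : 0 ≤ s := by positivity
  have hFval : F p y = h p + (⟪y, Q y⟫ - h (Q y)) - ⟪y, p⟫ := by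
    rw [hF, hhstar]
  -- key: for each l ∈ (0,1], K/2 * (1-l) * s ≤ F p y
  have key : ∀ l : ℝ, 0 < l → l ≤ 1 → K / 2 * (1 - l) * s ≤ F p y := by
    intro l hl0 hl1
    have hmem : l • p + (1 - l) • Q y ∈ X :=
      hXconv hp (hQmem y) hl0.le (by linarith) (by ring)
    have hopt := hQmax y _ hmem
    have hconv := hsc p hp (Q y) (hQmem y) l ⟨hl0.le, hl1⟩
    have hnorm : ‖p - Q y‖ = ‖Q y - p‖ := norm_sub_rev _ _
    rw [hnorm, ← hs] at hconv
    have hinner : ⟪y, l • p + (1 - l) • Q y⟫ = l * ⟪y, p⟫ + (1 - l) * ⟪y, Q y⟫ := by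
      rw [inner_add_right, real_inner_smul_right, real_inner_smul_right]
    rw [hinner] at hopt
    rw [hFval]
    have h4 : l * (K / 2 * (1 - l) * s) ≤
        l * (h p + (⟪y, Q y⟫ - h (Q y)) - ⟪y, p⟫) := by nlinarith
    exact (mul_le_mul_iff_right₀ hl0).mp h4
  -- let l → 0
  have hmain : K / 2 * s ≤ F p y := by
    refine le_of_forall_pos_le_add fun ε hε => ?_
    set l : ℝ := min 1 (ε / (K / 2 * s + 1)) with hl
    have hden : 0 < K / 2 * s + 1 := by positivity
    have hl0 : 0 < l := lt_min one_pos (div_pos hε hden)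
    have hl1 : l ≤ 1 := min_le_left _ _
    have h1 := key l hl0 hl1
    have h2 : K / 2 * s * l ≤ ε := by
      have : l ≤ ε / (K / 2 * s + 1) := min_le_right _ _
      have h3 : K / 2 * s * l ≤ K / 2 * s * (ε / (K / 2 * s + 1)) := by
        apply mul_le_mul_of_nonneg_left this (by positivity)
      calc K / 2 * s * l ≤ K / 2 * s * (ε / (K / 2 * s + 1)) := h3
        _ ≤ (K / 2 * s + 1) * (ε / (K / 2 * s + 1)) := by
            apply mul_le_mul_of_nonneg_right (by linarith) (by positivity)
        _ = ε := by field_simp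
    nlinarith
  exact hmain
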